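/- Let G be a connected finite simple graph on vertex set V containing a cycle whose vertex set is W, and suppose W ≠ V. Then there exists a vertex u ∈ V \ W such that G contains a path whose vertex set is exactly W ∪ {u} and which has u as an endpoint. In particular, G contains a path with |W| + 1 vertices. -/

import Mathlib

lemma ncard_mem_list {V : Type*} {l : List V} (hl : l.Nodup) :
    Set.ncard {x | x ∈ l} = l.length := by
  classical
  have : {x | x ∈ l} = (l.toFinset : Set V) := by ext x; simp
  rw [this, Set.ncard_coe_finset, List.toFinset_card_of_nodup hl]

lemma mem_support_tail_of_closed {V : Type*} {G : SimpleGraph V} {c x : V}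
    (C : G.Walk c c) (hC : ¬ C.Nil) : x ∈ C.support ↔ x ∈ C.support.tail := by
  constructor
  · intro hx
    rcases (C.mem_support_iff (w := x)).mp hx with h | h
    · subst h
      have hne : C.support.tail ≠ [] := by
        intro h0
        have h1 := C.length_support
        rw [C.support_eq_cons, h0] at h1
        simp only [List.length_cons, List.length_nil] at h1
        exact hC (SimpleGraph.Walk.nil_iff_length_eq.mpr (by omega))
      have h3 : C.support.getLast? = some x := by
        rw [List.getLast?_eq_getLast_of_ne_nil C.support_ne_nil, C.getLast_support]
      obtain ⟨y, t, ht⟩ := List.exists_cons_of_ne_nil hne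
      rw [C.support_eq_cons, ht, List.getLast?_cons_cons] at h3
      obtain ⟨h4, h5⟩ := List.mem_getLast?_eq_getLast h3
      rw [ht, h5]
      exact List.getLast_mem h4
    · exact h
  · intro hx
    exact (C.mem_support_iff (w := x)).mpr (Or.inr hx)

/-- If a connected graph `G` contains a cycle with vertex set `W ≠ V`, then there is a
vertex `u ∉ W` and a path of `G` with vertex set exactly `W ∪ {u}` having `u` as an
endpoint; in particular `G` contains a path with `|W| + 1` vertices. -/
theorem stmt_5 {V : Type*} [Fintype V] (G : SimpleGraph V) (hG : G.Connected)
    (W : Set V) (c : V) (C : G.Walk c c) (hC : C.IsCycle)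
    (hW : W = {x | x ∈ C.support}) (hWne : W ≠ Set.univ) :
    ∃ u ∉ W, ∃ w : V, ∃ P : G.Walk u w, P.IsPath ∧
      {x | x ∈ P.support} = W ∪ {u} ∧ P.support.length = W.ncard + 1 := by
  classical
  -- find a vertex outside W
  obtain ⟨u0, hu0⟩ : ∃ u0, u0 ∉ W := by
    by_contra h
    push_neg at h
    exact hWne (Set.eq_univ_of_forall h)
  -- boundary dart
  have hcW : c ∈ W := by rw [hW]; exact C.start_mem_support
  obtain ⟨p⟩ := hG c u0
  obtain ⟨d, -, haW, huW⟩ := p.exists_boundary_dart W hcW hu0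
  set a := d.fst with ha_def
  set u := d.snd with hu_def
  have ha : a ∈ C.support := by rw [hW] at haW; exact haW
  -- rotate the cycle to start at a
  set C' : G.Walk a a := C.rotate a ha with hC'def
  have hC' : C'.IsCycle := hC.rotate ha
  have hC'nil : ¬ C'.Nil := hC'.not_nil
  -- membership transfer
  have hmem : ∀ x, x ∈ C'.support ↔ x ∈ C.support := by
    intro x
    rw [mem_support_tail_of_closed C' hC'nil,
      mem_support_tail_of_closed C hC.not_nil]
    exact (C.support_rotate a ha).mem_iff
  -- the tail of the rotated cycle is a path with support = C'.support.tail
  set Q := C'.tail with hQdef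
  have hQsupp : Q.support = C'.support.tail := C'.support_tail_of_not_nil hC'nil
  have hQnd : Q.support.Nodup := by rw [hQsupp]; exact hC'.2
  have hQpath : Q.IsPath := by
    rw [SimpleGraph.Walk.isPath_def]; exact hQnd
  -- vertex set of Q is W
  have hQW : ∀ x, x ∈ Q.support ↔ x ∈ W := by
    intro x
    rw [hQsupp, ← mem_support_tail_of_closed C' hC'nil, hmem, hW]
    rfl
  have huQ : u ∉ Q.support := fun h => huW ((hQW u).mp h)
  -- build the path
  have hadj : G.Adj u a := d.adj.symm
  refine ⟨u, huW, C'.getVert 1, SimpleGraph.Walk.cons hadj Q.reverse, ?_, ?_, ?_⟩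
  · apply hQpath.reverse.cons
    simpa using huQ
  · ext x
    simp only [SimpleGraph.Walk.support_cons, List.mem_cons,
      SimpleGraph.Walk.support_reverse, List.mem_reverse, Set.mem_union,
      Set.mem_singleton_iff, Set.mem_setOf_eq]
    rw [hQW x]
    tauto
  · have hWcard : W.ncard = Q.support.length := by
      have : W = {x | x ∈ Q.support} := by ext x; rw [Set.mem_setOf_eq, hQW]
      rw [this, ncard_mem_list hQnd]
    simp [hWcard]
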